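/- arXiv:0909.0767 — 2 statements merged into one kernel-verified Lean document; each statement's English description precedes it below -/
import Mathlib

section
/- Let τ : U → ℝ be smooth and suppose f_y·∂τ/∂x = f_x·∂τ/∂y at every point of U (equivalently, (∂₁ − ∂₂)τ = 0, i.e., τ is a first integral of the vector field ∂₁ − ∂₂, of which f is a first integral). Then there exists a smooth function w : f(U) → ℝ such that τ = w ∘ f on U; here f(U) is an open interval. -/
open Set

/-- Partial derivative with respect to the first variable. -/
noncomputable def pdx (g : ℝ × ℝ → ℝ) (p : ℝ × ℝ) : ℝ :=
  deriv (fun x => g (x, p.2)) p.1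

/-- Partial derivative with respect to the second variable. -/
noncomputable def pdy (g : ℝ × ℝ → ℝ) (p : ℝ × ℝ) : ℝ :=
  deriv (fun y => g (p.1, y)) p.2

/-- The web function `H = f_{xy} / (f_x f_y)`. -/
noncomputable def Hf (f : ℝ × ℝ → ℝ) (p : ℝ × ℝ) : ℝ :=
  pdy (pdx f) p / (pdx f p * pdy f p)

section Aux

variable {f τ : ℝ × ℝ → ℝ} {I J : Set ℝ}

lemma slice_x_hasDerivAt {p : ℝ × ℝ} (h : DifferentiableAt ℝ f p) :
    HasDerivAt (fun x => f (x, p.2)) (fderiv ℝ f p (1, 0)) p.1 := by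
  have h1 : HasDerivAt (fun x : ℝ => (x, p.2)) ((1 : ℝ), (0 : ℝ)) p.1 :=
    (hasDerivAt_id p.1).prodMk (hasDerivAt_const p.1 p.2)
  simpa [Function.comp_def] using h.hasFDerivAt.comp_hasDerivAt p.1 h1

lemma slice_y_hasDerivAt {p : ℝ × ℝ} (h : DifferentiableAt ℝ f p) :
    HasDerivAt (fun y => f (p.1, y)) (fderiv ℝ f p (0, 1)) p.2 := by
  have h1 : HasDerivAt (fun y : ℝ => (p.1, y)) ((0 : ℝ), (1 : ℝ)) p.2 :=
    (hasDerivAt_const p.2 p.1).prodMk (hasDerivAt_id p.2)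
  simpa [Function.comp_def] using h.hasFDerivAt.comp_hasDerivAt p.2 h1

lemma pdx_eq_fderiv {p : ℝ × ℝ} (h : DifferentiableAt ℝ f p) :
    pdx f p = fderiv ℝ f p (1, 0) := (slice_x_hasDerivAt h).deriv

lemma pdy_eq_fderiv {p : ℝ × ℝ} (h : DifferentiableAt ℝ f p) :
    pdy f p = fderiv ℝ f p (0, 1) := (slice_y_hasDerivAt h).deriv

lemma fderiv_apply_pd {p : ℝ × ℝ} (h : DifferentiableAt ℝ f p) (u v : ℝ) :
    fderiv ℝ f p (u, v) = u * pdx f p + v * pdy f p := by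
  rw [pdx_eq_fderiv h, pdy_eq_fderiv h]
  have huv : (u, v) = u • ((1 : ℝ), (0 : ℝ)) + v • ((0 : ℝ), (1 : ℝ)) := by
    simp [Prod.ext_iff]
  rw [huv, map_add, map_smul, map_smul, smul_eq_mul, smul_eq_mul]

lemma one_le_top' : (1 : WithTop ℕ∞) ≤ ((⊤ : ℕ∞) : WithTop ℕ∞) := by
  exact_mod_cast le_top

lemma top_ne_zero'' : ((⊤ : ℕ∞) : WithTop ℕ∞) ≠ 0 := by
  simp

lemma loc_inv (hI : IsOpen I) (hJ : IsOpen J)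
    (hf : ContDiffOn ℝ (⊤ : ℕ∞) f (I ×ˢ J)) {p₀ : ℝ × ℝ} (hp₀ : p₀ ∈ I ×ˢ J)
    (hb : pdy f p₀ ≠ 0) :
    ∃ Ψ : ℝ × ℝ → ℝ × ℝ, ContDiffAt ℝ (⊤ : ℕ∞) Ψ (p₀.1, f p₀) ∧ Ψ (p₀.1, f p₀) = p₀ ∧
      ∀ᶠ z in nhds (p₀.1, f p₀), (Ψ z).1 = z.1 ∧ f (Ψ z) = z.2 ∧ Ψ z ∈ I ×ˢ J := by
  have hU : IsOpen (I ×ˢ J) := hI.prod hJ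
  have hUn : I ×ˢ J ∈ nhds p₀ := hU.mem_nhds hp₀
  have hfp : ContDiffAt ℝ (⊤ : ℕ∞) f p₀ := hf.contDiffAt hUn
  have hd : DifferentiableAt ℝ f p₀ := hfp.differentiableAt top_ne_zero''
  set a := pdx f p₀ with ha
  set b := pdy f p₀ with hbdef
  set L : ℝ × ℝ →L[ℝ] ℝ × ℝ := (ContinuousLinearMap.fst ℝ ℝ ℝ).prod (fderiv ℝ f p₀) with hLdef
  set M : ℝ × ℝ →L[ℝ] ℝ × ℝ := (ContinuousLinearMap.fst ℝ ℝ ℝ).prod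
      ((-(a / b)) • ContinuousLinearMap.fst ℝ ℝ ℝ + b⁻¹ • ContinuousLinearMap.snd ℝ ℝ ℝ)
      with hMdef
  have hLapp : ∀ z : ℝ × ℝ, L z = (z.1, z.1 * a + z.2 * b) := by
    intro z
    have := fderiv_apply_pd hd z.1 z.2
    simp only [hLdef, ContinuousLinearMap.prod_apply, ContinuousLinearMap.coe_fst']
    rw [show ((z.1, z.2) : ℝ × ℝ) = z from rfl] at this
    rw [this]
  have hMapp : ∀ z : ℝ × ℝ, M z = (z.1, -(a / b) * z.1 + b⁻¹ * z.2) := by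
    intro z
    simp [hMdef]
  have hML : ∀ z, M (L z) = z := by
    intro z
    rw [hLapp z, hMapp _]
    ext
    · rfl
    · simp only
      field_simp
      ring
  have hLM : ∀ z, L (M z) = z := by
    intro z
    rw [hMapp z, hLapp _]
    ext
    · rfl
    · simp only
      field_simp
      ring
  set e : (ℝ × ℝ) ≃L[ℝ] ℝ × ℝ := ContinuousLinearEquiv.equivOfInverse L M hML hLM with hedef
  have hΦ : ContDiffAt ℝ (⊤ : ℕ∞) (fun p : ℝ × ℝ => (p.1, f p)) p₀ :=
    contDiffAt_fst.prodMk hfp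
  have hLd : HasFDerivAt (fun p : ℝ × ℝ => (p.1, f p)) (e : (ℝ × ℝ) →L[ℝ] ℝ × ℝ) p₀ := by
    have h1 : HasFDerivAt (fun p : ℝ × ℝ => (p.1, f p)) L p₀ :=
      (hasFDerivAt_fst).prodMk hd.hasFDerivAt
    have : (e : (ℝ × ℝ) →L[ℝ] ℝ × ℝ) = L := rfl
    rw [this]
    exact h1
  refine ⟨hΦ.localInverse hLd top_ne_zero'', hΦ.to_localInverse hLd top_ne_zero'',
    hΦ.localInverse_apply_image hLd top_ne_zero'', ?_⟩
  have hS := hΦ.hasStrictFDerivAt' hLd top_ne_zero''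
  have hri := hS.eventually_right_inverse
  have hcont : ContinuousAt (hΦ.localInverse hLd top_ne_zero'') (p₀.1, f p₀) :=
    (hΦ.to_localInverse hLd top_ne_zero'').continuousAt
  have hmem : ∀ᶠ z in nhds (p₀.1, f p₀), (hΦ.localInverse hLd top_ne_zero'') z ∈ I ×ˢ J := by
    have h0 : I ×ˢ J ∈ nhds ((hΦ.localInverse hLd top_ne_zero'') (p₀.1, f p₀)) := by
      rw [hΦ.localInverse_apply_image hLd top_ne_zero'']; exact hUn
    exact hcont.eventually_mem h0
  filter_upwards [hri, hmem] with z h1 h2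
  have h1' : (((hΦ.localInverse hLd top_ne_zero'') z).1, f ((hΦ.localInverse hLd top_ne_zero'') z)) = z := h1
  rw [Prod.ext_iff] at h1'
  exact ⟨h1'.1, h1'.2, h2⟩

lemma pos_or_neg_on {s : Set (ℝ × ℝ)} (hs : IsPreconnected s) {g : ℝ × ℝ → ℝ}
    (hg : ContinuousOn g s) (h0 : ∀ p ∈ s, g p ≠ 0) :
    (∀ p ∈ s, 0 < g p) ∨ (∀ p ∈ s, g p < 0) := by
  by_contra h
  push_neg at h
  obtain ⟨⟨p, hp, hple⟩, q, hq, hqle⟩ := h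
  have himg := (hs.image g hg).ordConnected
  have h0m : (0 : ℝ) ∈ g '' s :=
    himg.out (mem_image_of_mem g hp) (mem_image_of_mem g hq) ⟨hple, hqle⟩
  obtain ⟨r, hr, hr0⟩ := h0m
  exact h0 r hr hr0

lemma pdx_contOn (hI : IsOpen I) (hJ : IsOpen J)
    (hf : ContDiffOn ℝ (⊤ : ℕ∞) f (I ×ˢ J)) : ContinuousOn (pdx f) (I ×ˢ J) := by
  have hU : IsOpen (I ×ˢ J) := hI.prod hJ
  have hfd : ContinuousOn (fderiv ℝ f) (I ×ˢ J) :=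
    hf.continuousOn_fderiv_of_isOpen hU one_le_top'
  have h1 : ContinuousOn (fun p => fderiv ℝ f p (1, 0)) (I ×ˢ J) :=
    hfd.clm_apply continuousOn_const
  exact h1.congr fun p hp =>
    pdx_eq_fderiv ((hf.contDiffAt (hU.mem_nhds hp)).differentiableAt top_ne_zero'')

lemma pdy_contOn (hI : IsOpen I) (hJ : IsOpen J)
    (hf : ContDiffOn ℝ (⊤ : ℕ∞) f (I ×ˢ J)) : ContinuousOn (pdy f) (I ×ˢ J) := by
  have hU : IsOpen (I ×ˢ J) := hI.prod hJ
  have hfd : ContinuousOn (fderiv ℝ f) (I ×ˢ J) :=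
    hf.continuousOn_fderiv_of_isOpen hU one_le_top'
  have h1 : ContinuousOn (fun p => fderiv ℝ f p (0, 1)) (I ×ˢ J) :=
    hfd.clm_apply continuousOn_const
  exact h1.congr fun p hp =>
    pdy_eq_fderiv ((hf.contDiffAt (hU.mem_nhds hp)).differentiableAt top_ne_zero'')

lemma vert_inj (hI : IsOpen I) (hJ : IsOpen J) (hIc : I.OrdConnected) (hJc : J.OrdConnected)
    (hf : ContDiffOn ℝ (⊤ : ℕ∞) f (I ×ˢ J))
    (hfy : ∀ p ∈ I ×ˢ J, pdy f p ≠ 0) :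
    ∀ x ∈ I, ∀ y₁ ∈ J, ∀ y₂ ∈ J, f (x, y₁) = f (x, y₂) → y₁ = y₂ := by
  have hpre : IsPreconnected (I ×ˢ J) := hIc.isPreconnected.prod hJc.isPreconnected
  have hsign := pos_or_neg_on hpre (pdy_contOn hI hJ hf) hfy
  intro x hx y₁ hy₁ y₂ hy₂ hfe
  have hcont : ContinuousOn (fun y => f (x, y)) J :=
    hf.continuousOn.comp ((continuous_const.prodMk continuous_id).continuousOn)
      (fun y hy => mk_mem_prod hx hy)
  rcases hsign with hpos | hneg
  · have hmono : StrictMonoOn (fun y => f (x, y)) J := by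
      apply strictMonoOn_of_deriv_pos (hJc.convex) hcont
      intro y hy
      rw [hJ.interior_eq] at hy
      exact hpos (x, y) (mk_mem_prod hx hy)
    exact hmono.injOn hy₁ hy₂ hfe
  · have hmono : StrictAntiOn (fun y => f (x, y)) J := by
      apply strictAntiOn_of_deriv_neg (hJc.convex) hcont
      intro y hy
      rw [hJ.interior_eq] at hy
      exact hneg (x, y) (mk_mem_prod hx hy)
    exact hmono.injOn hy₁ hy₂ hfe

lemma exists_level_y (hI : IsOpen I) (hJ : IsOpen J) (hIc : I.OrdConnected)
    (hJc : J.OrdConnected)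
    (hf : ContDiffOn ℝ (⊤ : ℕ∞) f (I ×ˢ J))
    (hfx : ∀ p ∈ I ×ˢ J, pdx f p ≠ 0)
    {x₁ y₁ x₂ y₂ x : ℝ} (hx₁ : x₁ ∈ I) (hy₁ : y₁ ∈ J) (hx₂ : x₂ ∈ I) (hy₂ : y₂ ∈ J)
    (hx : x ∈ I) (hlt1 : x₁ < x) (hlt2 : x < x₂) (hc : f (x₁, y₁) = f (x₂, y₂)) :
    ∃ y ∈ J, f (x, y) = f (x₁, y₁) := by
  have hpre : IsPreconnected (I ×ˢ J) := hIc.isPreconnected.prod hJc.isPreconnected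
  have hsign := pos_or_neg_on hpre (pdx_contOn hI hJ hf) hfx
  have hslice : ∀ y ∈ J, ContinuousOn (fun t => f (t, y)) I := fun y hy =>
    hf.continuousOn.comp ((continuous_id.prodMk continuous_const).continuousOn)
      (fun t ht => mk_mem_prod ht hy)
  set c := f (x₁, y₁) with hcdef
  have hstrad : (f (x, y₁) - c) * (f (x, y₂) - c) < 0 := by
    rcases hsign with hpos | hneg
    · have hm : ∀ y ∈ J, StrictMonoOn (fun t => f (t, y)) I := by
        intro y hy
        apply strictMonoOn_of_deriv_pos (hIc.convex) (hslice y hy)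
        intro t ht
        rw [hI.interior_eq] at ht
        exact hpos (t, y) (mk_mem_prod ht hy)
      have h1 : c < f (x, y₁) := hm y₁ hy₁ hx₁ hx hlt1
      have h2 : f (x, y₂) < c := by
        have := hm y₂ hy₂ hx hx₂ hlt2
        rw [hc]
        exact this
      exact mul_neg_of_pos_of_neg (by linarith) (by linarith)
    · have hm : ∀ y ∈ J, StrictAntiOn (fun t => f (t, y)) I := by
        intro y hy
        apply strictAntiOn_of_deriv_neg (hIc.convex) (hslice y hy)
        intro t ht
        rw [hI.interior_eq] at ht
        exact hneg (t, y) (mk_mem_prod ht hy)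
      have h1 : f (x, y₁) < c := hm y₁ hy₁ hx₁ hx hlt1
      have h2 : c < f (x, y₂) := by
        have := hm y₂ hy₂ hx hx₂ hlt2
        rw [hc]
        exact this
      exact mul_neg_of_neg_of_pos (by linarith) (by linarith)
  have hJsub : uIcc y₁ y₂ ⊆ J := hJc.uIcc_subset hy₁ hy₂
  have hvc : ContinuousOn (fun y => f (x, y)) (uIcc y₁ y₂) :=
    (hf.continuousOn.comp ((continuous_const.prodMk continuous_id).continuousOn)
      (fun y hy => mk_mem_prod hx (hJsub hy)))
  have hmem : c ∈ uIcc (f (x, y₁)) (f (x, y₂)) := by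
    rcases mul_neg_iff.mp hstrad with ⟨h1, h2⟩ | ⟨h1, h2⟩
    · exact mem_uIcc.mpr (Or.inr ⟨by linarith, by linarith⟩)
    · exact mem_uIcc.mpr (Or.inl ⟨by linarith, by linarith⟩)
  obtain ⟨y, hy, hfy⟩ := intermediate_value_uIcc hvc hmem
  exact ⟨y, hJsub hy, hfy⟩

lemma loc_const (hI : IsOpen I) (hJ : IsOpen J)
    (hf : ContDiffOn ℝ (⊤ : ℕ∞) f (I ×ˢ J))
    (hfy : ∀ p ∈ I ×ˢ J, pdy f p ≠ 0)
    (hτ : ContDiffOn ℝ (⊤ : ℕ∞) τ (I ×ˢ J))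
    (heq : ∀ p ∈ I ×ˢ J, pdy f p * pdx τ p = pdx f p * pdy τ p)
    {p₀ : ℝ × ℝ} (hp₀ : p₀ ∈ I ×ˢ J) :
    ∃ ε > 0, ∀ x ∈ Metric.ball p₀.1 ε, ∃ y ∈ J, f (x, y) = f p₀ ∧ τ (x, y) = τ p₀ := by
  have hU : IsOpen (I ×ˢ J) := hI.prod hJ
  obtain ⟨Ψ, hΨcd, hΨ0, hΨev⟩ := loc_inv hI hJ hf hp₀ (hfy p₀ hp₀)
  set c₀ := f p₀ with hc₀
  set g : ℝ → ℝ := fun x => (Ψ (x, c₀)).2 with hgdef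
  have hιt : Filter.Tendsto (fun x : ℝ => (x, c₀)) (nhds p₀.1) (nhds (p₀.1, c₀)) :=
    (continuous_id.prodMk continuous_const).tendsto p₀.1
  have hEv : ∀ᶠ x in nhds p₀.1,
      (Ψ (x, c₀)).1 = x ∧ f (Ψ (x, c₀)) = c₀ ∧ Ψ (x, c₀) ∈ I ×ˢ J := hιt.eventually hΨev
  have hEv' : ∀ᶠ x in nhds p₀.1, f (x, g x) = c₀ ∧ (x, g x) ∈ I ×ˢ J := by
    filter_upwards [hEv] with x hx
    have hxe : Ψ (x, c₀) = (x, g x) := Prod.ext hx.1 rfl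
    rw [hxe] at hx
    exact ⟨hx.2.1, hx.2.2⟩
  have hgc : ContDiffAt ℝ (⊤ : ℕ∞) g p₀.1 := by
    have hι' : ContDiffAt ℝ (⊤ : ℕ∞) (fun x : ℝ => (x, c₀)) p₀.1 :=
      contDiffAt_id.prodMk contDiffAt_const
    exact contDiffAt_snd.comp p₀.1 (hΨcd.comp p₀.1 hι')
  have hg1 : ContDiffAt ℝ 1 g p₀.1 := hgc.of_le one_le_top'
  obtain ⟨u, hu, hgu⟩ := hg1.contDiffOn le_rfl (by simp)
  obtain ⟨O, hOsub, hOopen, hOx⟩ := mem_nhds_iff.mp (Filter.inter_mem hu hEv')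
  have hgO : ContDiffOn ℝ 1 g O := hgu.mono (fun x hx => (hOsub hx).1)
  have hkey : ∀ x ∈ O, HasDerivAt (fun t => τ (t, g t)) 0 x := by
    intro x hx
    have hxS := (hOsub hx).2
    have hpU : (x, g x) ∈ I ×ˢ J := hxS.2
    have hgd : DifferentiableAt ℝ g x :=
      ((hgO.differentiableOn one_ne_zero) x hx).differentiableAt (hOopen.mem_nhds hx)
    set d := deriv g x with hd
    have hγ : HasDerivAt (fun t => (t, g t)) ((1 : ℝ), d) x :=
      (hasDerivAt_id x).prodMk hgd.hasDerivAt
    have hfd2 : DifferentiableAt ℝ f (x, g x) :=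
      (hf.contDiffAt (hU.mem_nhds hpU)).differentiableAt top_ne_zero''
    have hF : HasDerivAt (fun t => f (t, g t)) (fderiv ℝ f (x, g x) (1, d)) x :=
      hfd2.hasFDerivAt.comp_hasDerivAt x hγ
    have hFc : HasDerivAt (fun t => f (t, g t)) 0 x := by
      have hev : (fun t => f (t, g t)) =ᶠ[nhds x] fun _ => c₀ := by
        filter_upwards [hOopen.mem_nhds hx] with t ht using (hOsub ht).2.1
      exact (hasDerivAt_const x c₀).congr_of_eventuallyEq hev
    have hzero : fderiv ℝ f (x, g x) (1, d) = 0 := hF.unique hFc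
    rw [fderiv_apply_pd hfd2] at hzero
    have hτd : DifferentiableAt ℝ τ (x, g x) :=
      (hτ.contDiffAt (hU.mem_nhds hpU)).differentiableAt top_ne_zero''
    have hT : HasDerivAt (fun t => τ (t, g t)) (fderiv ℝ τ (x, g x) (1, d)) x :=
      hτd.hasFDerivAt.comp_hasDerivAt x hγ
    have hτzero : fderiv ℝ τ (x, g x) (1, d) = 0 := by
      rw [fderiv_apply_pd hτd]
      have h2 := heq (x, g x) hpU
      have hb := hfy (x, g x) hpU
      have hbz : pdy f (x, g x) * (1 * pdx τ (x, g x) + d * pdy τ (x, g x)) = 0 := by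
        linear_combination h2 + pdy τ (x, g x) * hzero
      exact (mul_eq_zero.mp hbz).resolve_left hb
    rw [hτzero] at hT
    exact hT
  obtain ⟨ε, hε, hball⟩ := Metric.mem_nhds_iff.mp (hOopen.mem_nhds hOx)
  refine ⟨ε, hε, fun x hx => ?_⟩
  have hxO := hball hx
  refine ⟨g x, ((hOsub hxO).2.2).2, (hOsub hxO).2.1, ?_⟩
  have hconst : τ (x, g x) = τ (p₀.1, g p₀.1) := by
    apply Convex.is_const_of_fderivWithin_eq_zero (convex_ball p₀.1 ε)
      (fun z hz => ((hkey z (hball hz)).differentiableAt).differentiableWithinAt)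
      ?_ hx (Metric.mem_ball_self hε)
    intro z hz
    rw [fderivWithin_of_isOpen Metric.isOpen_ball hz]
    have h := hkey z (hball hz)
    have h2 : HasFDerivAt (fun t => τ (t, g t))
        (ContinuousLinearMap.smulRight (1 : ℝ →L[ℝ] ℝ) (0 : ℝ)) z := h
    rw [h2.fderiv]
    ext
    simp
  rw [hconst]
  have hg0 : g p₀.1 = p₀.2 := by
    show (Ψ (p₀.1, c₀)).2 = p₀.2
    rw [hΨ0]
  rw [hg0]

lemma key_aux (hI : IsOpen I) (hJ : IsOpen J) (hIc : I.OrdConnected) (hJc : J.OrdConnected)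
    (hf : ContDiffOn ℝ (⊤ : ℕ∞) f (I ×ˢ J))
    (hfx : ∀ p ∈ I ×ˢ J, pdx f p ≠ 0) (hfy : ∀ p ∈ I ×ˢ J, pdy f p ≠ 0)
    (hτ : ContDiffOn ℝ (⊤ : ℕ∞) τ (I ×ˢ J))
    (heq : ∀ p ∈ I ×ˢ J, pdy f p * pdx τ p = pdx f p * pdy τ p)
    {x₁ y₁ x₂ y₂ : ℝ} (hx₁ : x₁ ∈ I) (hy₁ : y₁ ∈ J) (hx₂ : x₂ ∈ I) (hy₂ : y₂ ∈ J)
    (hle : x₁ ≤ x₂) (hfeq : f (x₁, y₁) = f (x₂, y₂)) : τ (x₁, y₁) = τ (x₂, y₂) := by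
  set c := f (x₁, y₁) with hcdef
  set T := {x | x ∈ Icc x₁ x₂ ∧ ∃ y ∈ J, f (x, y) = c ∧ τ (x, y) = τ (x₁, y₁)} with hTdef
  have hx₁T : x₁ ∈ T := ⟨⟨le_refl x₁, hle⟩, y₁, hy₁, rfl, rfl⟩
  have hTsub : T ⊆ Icc x₁ x₂ := fun x hx => hx.1
  have hbdd : BddAbove T := bddAbove_Icc.mono hTsub
  set m := sSup T with hmdef
  have hm₁ : x₁ ≤ m := le_csSup hbdd hx₁T
  have hm₂ : m ≤ x₂ := csSup_le ⟨x₁, hx₁T⟩ fun x hx => hx.1.2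
  have hmI : m ∈ I := hIc.out hx₁ hx₂ ⟨hm₁, hm₂⟩
  have hym : ∃ y ∈ J, f (m, y) = c := by
    rcases eq_or_lt_of_le hm₁ with he | hlt1
    · exact ⟨y₁, hy₁, by rw [← he]⟩
    · rcases eq_or_lt_of_le hm₂ with he | hlt2
      · refine ⟨y₂, hy₂, ?_⟩
        rw [he]
        exact hfeq.symm
      · exact exists_level_y hI hJ hIc hJc hf hfx hx₁ hy₁ hx₂ hy₂ hmI hlt1 hlt2 hfeq
  obtain ⟨ym, hymJ, hymf⟩ := hym
  have hpmU : (m, ym) ∈ I ×ˢ J := mk_mem_prod hmI hymJ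
  obtain ⟨ε, hε, hball⟩ := loc_const hI hJ hf hfy hτ heq hpmU
  have hclaim1 : τ (m, ym) = τ (x₁, y₁) := by
    obtain ⟨x, hxT, hxlt⟩ := exists_lt_of_lt_csSup ⟨x₁, hx₁T⟩ (by linarith : m - ε < m)
    have hxm : x ≤ m := le_csSup hbdd hxT
    have hxball : x ∈ Metric.ball m ε := by
      rw [Metric.mem_ball, Real.dist_eq]
      exact abs_lt.mpr ⟨by linarith, by linarith⟩
    obtain ⟨y', hy'J, hy'f, hy'τ⟩ := hball x hxball
    obtain ⟨hxIcc, y, hyJ, hyf, hyτ⟩ := hxT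
    have hxI : x ∈ I := hIc.out hx₁ hx₂ hxIcc
    have hyy' : y = y' := by
      apply vert_inj hI hJ hIc hJc hf hfy x hxI y hyJ y' hy'J
      rw [hyf, hy'f, hymf]
    rw [← hyτ, hyy', ← hy'τ]
  have hmx₂ : m = x₂ := by
    by_contra hne
    have hlt : m < x₂ := lt_of_le_of_ne hm₂ hne
    set x := min (m + ε / 2) x₂ with hxdef
    have hxgt : m < x := lt_min (by linarith) hlt
    have hxle : x ≤ x₂ := min_le_right _ _
    have hxIcc : x ∈ Icc x₁ x₂ := ⟨le_of_lt (lt_of_le_of_lt hm₁ hxgt), hxle⟩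
    have hxball : x ∈ Metric.ball m ε := by
      rw [Metric.mem_ball, Real.dist_eq]
      have h1 : x ≤ m + ε / 2 := min_le_left _ _
      exact abs_lt.mpr ⟨by linarith, by linarith⟩
    obtain ⟨y', hy'J, hy'f, hy'τ⟩ := hball x hxball
    have hxT : x ∈ T := ⟨hxIcc, y', hy'J, hy'f.trans hymf, hy'τ.trans hclaim1⟩
    exact absurd (le_csSup hbdd hxT) (not_le.mpr hxgt)
  have hymy₂ : ym = y₂ := by
    apply vert_inj hI hJ hIc hJc hf hfy x₂ hx₂ ym (by exact hymJ) y₂ hy₂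
    rw [← hmx₂, hymf, hmx₂]
    exact hfeq
  rw [← hclaim1, hmx₂, hymy₂]

lemma key (hI : IsOpen I) (hJ : IsOpen J) (hIc : I.OrdConnected) (hJc : J.OrdConnected)
    (hf : ContDiffOn ℝ (⊤ : ℕ∞) f (I ×ˢ J))
    (hfx : ∀ p ∈ I ×ˢ J, pdx f p ≠ 0) (hfy : ∀ p ∈ I ×ˢ J, pdy f p ≠ 0)
    (hτ : ContDiffOn ℝ (⊤ : ℕ∞) τ (I ×ˢ J))
    (heq : ∀ p ∈ I ×ˢ J, pdy f p * pdx τ p = pdx f p * pdy τ p) :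
    ∀ p ∈ I ×ˢ J, ∀ q ∈ I ×ˢ J, f p = f q → τ p = τ q := by
  rintro ⟨x₁, y₁⟩ ⟨hx₁, hy₁⟩ ⟨x₂, y₂⟩ ⟨hx₂, hy₂⟩ hfeq
  rcases le_total x₁ x₂ with h | h
  · exact key_aux hI hJ hIc hJc hf hfx hfy hτ heq hx₁ hy₁ hx₂ hy₂ h hfeq
  · exact (key_aux hI hJ hIc hJc hf hfx hfy hτ heq hx₂ hy₂ hx₁ hy₁ h hfeq.symm).symm

end Aux

/-- First integrals of `δ = ∂₁ - ∂₂`: a smooth `τ` on `U = I ×ˢ J`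
with `f_y·∂τ/∂x = f_x·∂τ/∂y` on `U` factors through `f`, i.e. `τ = w ∘ f` for some
smooth `w` on the image `f(U)`, which is open and order-connected (an open interval). -/
theorem samuelson_first_integral_factors
    (I J : Set ℝ) (hI : IsOpen I) (hJ : IsOpen J)
    (hIc : I.OrdConnected) (hJc : J.OrdConnected)
    (f : ℝ × ℝ → ℝ) (hf : ContDiffOn ℝ (⊤ : ℕ∞) f (I ×ˢ J))
    (hfx : ∀ p ∈ I ×ˢ J, pdx f p ≠ 0) (hfy : ∀ p ∈ I ×ˢ J, pdy f p ≠ 0)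
    (τ : ℝ × ℝ → ℝ) (hτ : ContDiffOn ℝ (⊤ : ℕ∞) τ (I ×ˢ J))
    (heq : ∀ p ∈ I ×ˢ J, pdy f p * pdx τ p = pdx f p * pdy τ p) :
    IsOpen (f '' (I ×ˢ J)) ∧ (f '' (I ×ˢ J)).OrdConnected ∧
      ∃ w : ℝ → ℝ, ContDiffOn ℝ (⊤ : ℕ∞) w (f '' (I ×ˢ J)) ∧
        ∀ p ∈ I ×ˢ J, τ p = w (f p) := by
  classical
  have hU : IsOpen (I ×ˢ J) := hI.prod hJ
  have hkey := key hI hJ hIc hJc hf hfx hfy hτ heq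
  have hsec : ∀ p₀ ∈ I ×ˢ J, ∃ s : ℝ → ℝ × ℝ, ContDiffAt ℝ (⊤ : ℕ∞) s (f p₀) ∧
      s (f p₀) = p₀ ∧ ∀ᶠ c in nhds (f p₀), f (s c) = c ∧ s c ∈ I ×ˢ J := by
    intro p₀ hp₀
    obtain ⟨Ψ, hcd, h0, hev⟩ := loc_inv hI hJ hf hp₀ (hfy p₀ hp₀)
    refine ⟨fun c => Ψ (p₀.1, c), ?_, h0, ?_⟩
    · exact hcd.comp (f p₀) (contDiffAt_const.prodMk contDiffAt_id)
    · have hιt : Filter.Tendsto (fun c : ℝ => (p₀.1, c)) (nhds (f p₀))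
          (nhds (p₀.1, f p₀)) := (continuous_const.prodMk continuous_id).tendsto (f p₀)
      filter_upwards [hιt.eventually hev] with c hc
      exact ⟨hc.2.1, hc.2.2⟩
  refine ⟨?_, ?_, ?_⟩
  · rw [isOpen_iff_mem_nhds]
    rintro c₀ ⟨p₀, hp₀, rfl⟩
    obtain ⟨s, hscd, hs0, hsev⟩ := hsec p₀ hp₀
    rw [← Filter.eventually_mem_set]
    filter_upwards [hsev] with c hc
    exact ⟨s c, hc.2, hc.1⟩
  · exact ((hIc.isPreconnected.prod hJc.isPreconnected).image f hf.continuousOn).ordConnected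
  · set w : ℝ → ℝ := fun c => if h : ∃ p, p ∈ I ×ˢ J ∧ f p = c then τ h.choose else 0
      with hwdef
    have hwval : ∀ p ∈ I ×ˢ J, w (f p) = τ p := by
      intro p hp
      have hex : ∃ q, q ∈ I ×ˢ J ∧ f q = f p := ⟨p, hp, rfl⟩
      simp only [hwdef]
      rw [dif_pos hex]
      exact hkey hex.choose hex.choose_spec.1 p hp hex.choose_spec.2
    refine ⟨w, ?_, fun p hp => (hwval p hp).symm⟩
    rintro c₀ ⟨p₀, hp₀, rfl⟩
    obtain ⟨s, hscd, hs0, hsev⟩ := hsec p₀ hp₀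
    have hτs : ContDiffAt ℝ (⊤ : ℕ∞) (fun c => τ (s c)) (f p₀) := by
      have hτc : ContDiffAt ℝ (⊤ : ℕ∞) τ (s (f p₀)) := by
        rw [hs0]
        exact hτ.contDiffAt (hU.mem_nhds hp₀)
      exact hτc.comp (f p₀) hscd
    have hev2 : w =ᶠ[nhds (f p₀)] fun c => τ (s c) := by
      filter_upwards [hsev] with c hc
      have hex : ∃ q, q ∈ I ×ˢ J ∧ f q = c := ⟨s c, hc.2, hc.1⟩
      simp only [hwdef]
      rw [dif_pos hex]
      exact hkey hex.choose hex.choose_spec.1 (s c) hc.2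
        (by rw [hex.choose_spec.2, hc.1])
    exact (hτs.congr_of_eventuallyEq hev2).contDiffWithinAt
end

section
/- Let b, B : U → ℝ be smooth, suppose Δ = b_x b_y − b·b_{xy} vanishes nowhere on U, and suppose the two integrability conditions hold on all of U: (J₁) the function P = (b_y B_x − b B_{xy})/Δ satisfies ∂P/∂y = 0, and (J₂) ∂P/∂x = (b_x B_{xy} − b_{xy} B_x)/Δ. Then there exist smooth s₁ : I → ℝ and s₂ : J → ℝ with b(x,y)·s₁′(x) + s₂′(y) = B(x,y) on U; moreover, for any two solution pairs (s₁, s₂) and (s̃₁, s̃₂) the differences s₁ − s̃₁ and s₂ − s̃₂ are constant, so the set of solution pairs is a 2-dimensional affine subspace of the space of pairs of functions. -/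
open Set
open scoped ContDiff

lemma hasDerivAt_slice_x {U : Set (ℝ × ℝ)} (hU : IsOpen U) {g : ℝ × ℝ → ℝ}
    (hg : ContDiffOn ℝ (⊤ : ℕ∞) g U) {p : ℝ × ℝ} (hp : p ∈ U) :
    HasDerivAt (fun x => g (x, p.2)) (fderiv ℝ g p (1, 0)) p.1 := by
  have hd : DifferentiableAt ℝ g p :=
    (hg.contDiffAt (hU.mem_nhds hp)).differentiableAt (by simp)
  have hc : HasDerivAt (fun x : ℝ => (x, p.2)) ((1 : ℝ), (0 : ℝ)) p.1 :=
    (hasDerivAt_id p.1).prodMk (hasDerivAt_const p.1 p.2)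
  have := hd.hasFDerivAt.comp_hasDerivAt p.1 hc
  simpa [Function.comp_def] using this

lemma hasDerivAt_slice_y {U : Set (ℝ × ℝ)} (hU : IsOpen U) {g : ℝ × ℝ → ℝ}
    (hg : ContDiffOn ℝ (⊤ : ℕ∞) g U) {p : ℝ × ℝ} (hp : p ∈ U) :
    HasDerivAt (fun y => g (p.1, y)) (fderiv ℝ g p (0, 1)) p.2 := by
  have hd : DifferentiableAt ℝ g p :=
    (hg.contDiffAt (hU.mem_nhds hp)).differentiableAt (by simp)
  have hc : HasDerivAt (fun y : ℝ => (p.1, y)) ((0 : ℝ), (1 : ℝ)) p.2 :=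
    (hasDerivAt_const p.2 p.1).prodMk (hasDerivAt_id p.2)
  have := hd.hasFDerivAt.comp_hasDerivAt p.2 hc
  simpa [Function.comp_def] using this

lemma pdx_eq_fderiv_s11 {U : Set (ℝ × ℝ)} (hU : IsOpen U) {g : ℝ × ℝ → ℝ}
    (hg : ContDiffOn ℝ (⊤ : ℕ∞) g U) {p : ℝ × ℝ} (hp : p ∈ U) :
    pdx g p = fderiv ℝ g p (1, 0) :=
  (hasDerivAt_slice_x hU hg hp).deriv

lemma pdy_eq_fderiv_s11 {U : Set (ℝ × ℝ)} (hU : IsOpen U) {g : ℝ × ℝ → ℝ}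
    (hg : ContDiffOn ℝ (⊤ : ℕ∞) g U) {p : ℝ × ℝ} (hp : p ∈ U) :
    pdy g p = fderiv ℝ g p (0, 1) :=
  (hasDerivAt_slice_y hU hg hp).deriv

lemma hasDerivAt_pdx {U : Set (ℝ × ℝ)} (hU : IsOpen U) {g : ℝ × ℝ → ℝ}
    (hg : ContDiffOn ℝ (⊤ : ℕ∞) g U) {p : ℝ × ℝ} (hp : p ∈ U) :
    HasDerivAt (fun x => g (x, p.2)) (pdx g p) p.1 := by
  rw [pdx_eq_fderiv_s11 hU hg hp]; exact hasDerivAt_slice_x hU hg hp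

lemma hasDerivAt_pdy {U : Set (ℝ × ℝ)} (hU : IsOpen U) {g : ℝ × ℝ → ℝ}
    (hg : ContDiffOn ℝ (⊤ : ℕ∞) g U) {p : ℝ × ℝ} (hp : p ∈ U) :
    HasDerivAt (fun y => g (p.1, y)) (pdy g p) p.2 := by
  rw [pdy_eq_fderiv_s11 hU hg hp]; exact hasDerivAt_slice_y hU hg hp

lemma contDiffOn_pdx {U : Set (ℝ × ℝ)} (hU : IsOpen U) {g : ℝ × ℝ → ℝ}
    (hg : ContDiffOn ℝ (⊤ : ℕ∞) g U) : ContDiffOn ℝ (⊤ : ℕ∞) (pdx g) U := by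
  have h1 : ContDiffOn ℝ (⊤ : ℕ∞) (fun q => fderiv ℝ g q) U :=
    hg.fderiv_of_isOpen hU (by exact_mod_cast le_top)
  have h2 : ContDiffOn ℝ (⊤ : ℕ∞) (fun q => fderiv ℝ g q (1, 0)) U :=
    h1.clm_apply contDiffOn_const
  exact h2.congr fun q hq => pdx_eq_fderiv_s11 hU hg hq

lemma contDiffOn_pdy {U : Set (ℝ × ℝ)} (hU : IsOpen U) {g : ℝ × ℝ → ℝ}
    (hg : ContDiffOn ℝ (⊤ : ℕ∞) g U) : ContDiffOn ℝ (⊤ : ℕ∞) (pdy g) U := by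
  have h1 : ContDiffOn ℝ (⊤ : ℕ∞) (fun q => fderiv ℝ g q) U :=
    hg.fderiv_of_isOpen hU (by exact_mod_cast le_top)
  have h2 : ContDiffOn ℝ (⊤ : ℕ∞) (fun q => fderiv ℝ g q (0, 1)) U :=
    h1.clm_apply contDiffOn_const
  exact h2.congr fun q hq => pdy_eq_fderiv_s11 hU hg hq

lemma eq_const_of_hasDerivAt_zero {s : Set ℝ} (hc : s.OrdConnected) {f : ℝ → ℝ}
    (hf : ∀ x ∈ s, HasDerivAt f 0 x) :
    ∀ a ∈ s, ∀ b ∈ s, f a = f b := by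
  have key : ∀ a ∈ s, ∀ b ∈ s, a ≤ b → f b = f a := by
    intro a ha b hb hab
    have hsub : Icc a b ⊆ s := hc.out ha hb
    exact constant_of_has_deriv_right_zero
      (fun x hx => ((hf x (hsub hx)).continuousAt).continuousWithinAt)
      (fun x hx => ((hf x (hsub (Ico_subset_Icc_self hx))).hasDerivWithinAt))
      b (right_mem_Icc.2 hab)
  intro a ha b hb
  rcases le_total a b with h | h
  · exact (key a ha b hb h).symm
  · exact key b hb a ha h
/-- Solvability of `b·s₁'(x) + s₂'(y) = B(x,y)` when
`Δ = b_x b_y - b b_{xy} ≠ 0`: if the integrability conditions `J₁` and `J₂` hold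
on `U` (the function `P = (b_y B_x - b B_{xy})/Δ` has vanishing `y`-derivative and
its `x`-derivative equals `(b_x B_{xy} - b_{xy} B_x)/Δ`), then smooth solutions
`s₁, s₂` exist; moreover any two solution pairs differ by constants, so the
solution set is a 2-dimensional affine family. -/
theorem samuelson_s_equation_solvability
    (I J : Set ℝ) (hI : IsOpen I) (hJ : IsOpen J)
    (hIc : I.OrdConnected) (hJc : J.OrdConnected)
    (hne : (I ×ˢ J : Set (ℝ × ℝ)).Nonempty)
    (b B : ℝ × ℝ → ℝ)
    (hb : ContDiffOn ℝ (⊤ : ℕ∞) b (I ×ˢ J)) (hB : ContDiffOn ℝ (⊤ : ℕ∞) B (I ×ˢ J))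
    (hΔ : ∀ p ∈ I ×ˢ J, pdx b p * pdy b p - b p * pdy (pdx b) p ≠ 0)
    (hJ₁ : ∀ p ∈ I ×ˢ J,
      pdy (fun q => (pdy b q * pdx B q - b q * pdy (pdx B) q)
        / (pdx b q * pdy b q - b q * pdy (pdx b) q)) p = 0)
    (hJ₂ : ∀ p ∈ I ×ˢ J,
      pdx (fun q => (pdy b q * pdx B q - b q * pdy (pdx B) q)
        / (pdx b q * pdy b q - b q * pdy (pdx b) q)) p
      = (pdx b p * pdy (pdx B) p - pdy (pdx b) p * pdx B p)
        / (pdx b p * pdy b p - b p * pdy (pdx b) p)) :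
    (∃ s₁ s₂ : ℝ → ℝ, ContDiffOn ℝ (⊤ : ℕ∞) s₁ I ∧ ContDiffOn ℝ (⊤ : ℕ∞) s₂ J ∧
      ∀ p ∈ I ×ˢ J, b p * deriv s₁ p.1 + deriv s₂ p.2 = B p) ∧
    (∀ s₁ s₂ t₁ t₂ : ℝ → ℝ,
      DifferentiableOn ℝ s₁ I → DifferentiableOn ℝ s₂ J →
      DifferentiableOn ℝ t₁ I → DifferentiableOn ℝ t₂ J →
      (∀ p ∈ I ×ˢ J, b p * deriv s₁ p.1 + deriv s₂ p.2 = B p) →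
      (∀ p ∈ I ×ˢ J, b p * deriv t₁ p.1 + deriv t₂ p.2 = B p) →
      (∃ c₁ : ℝ, ∀ x ∈ I, s₁ x - t₁ x = c₁) ∧
      (∃ c₂ : ℝ, ∀ y ∈ J, s₂ y - t₂ y = c₂)) := by
  have hU : IsOpen (I ×ˢ J) := hI.prod hJ
  obtain ⟨⟨x₀, y₀⟩, hp₀⟩ := hne
  have hx₀ : x₀ ∈ I := hp₀.1
  have hy₀ : y₀ ∈ J := hp₀.2
  have hmem : ∀ {x y : ℝ}, x ∈ I → y ∈ J → ((x, y) : ℝ × ℝ) ∈ I ×ˢ J :=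
    fun hx hy => Set.mem_prod.2 ⟨hx, hy⟩
  set P : ℝ × ℝ → ℝ := fun q => (pdy b q * pdx B q - b q * pdy (pdx B) q)
        / (pdx b q * pdy b q - b q * pdy (pdx b) q) with hPdef
  -- smoothness of all players
  have hbx := contDiffOn_pdx hU hb
  have hby := contDiffOn_pdy hU hb
  have hbxy := contDiffOn_pdy hU hbx
  have hBx := contDiffOn_pdx hU hB
  have hBxy := contDiffOn_pdy hU hBx
  have hP : ContDiffOn ℝ (⊤ : ℕ∞) P (I ×ˢ J) :=
    ((hby.mul hBx).sub (hb.mul hBxy)).div ((hbx.mul hby).sub (hb.mul hbxy)) hΔ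
  -- K1 : P is independent of y
  have K1 : ∀ x ∈ I, ∀ y ∈ J, P (x, y) = P (x, y₀) := by
    intro x hx
    have hder : ∀ y ∈ J, HasDerivAt (fun y => P (x, y)) 0 y := by
      intro y hy
      have h := hasDerivAt_pdy hU hP (hmem hx hy)
      rw [hJ₁ (x, y) (hmem hx hy)] at h
      exact h
    intro y hy
    exact eq_const_of_hasDerivAt_zero hJc hder y hy y₀ hy₀
  -- K2 : B - b * P is independent of x
  have K2 : ∀ y ∈ J, ∀ x ∈ I,
      B (x, y) - b (x, y) * P (x, y) = B (x₀, y) - b (x₀, y) * P (x₀, y) := by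
    intro y hy
    have hder : ∀ x ∈ I, HasDerivAt (fun x => B (x, y) - b (x, y) * P (x, y)) 0 x := by
      intro x hx
      have hm := hmem hx hy
      have h1 := hasDerivAt_pdx hU hB hm
      have h2 := (hasDerivAt_pdx hU hb hm).mul (hasDerivAt_pdx hU hP hm)
      have h := h1.sub h2
      have hval : pdx B (x, y) -
          (pdx b (x, y) * P (x, y) + b (x, y) * pdx P (x, y)) = 0 := by
        rw [hJ₂ (x, y) hm, hPdef]
        have hD := hΔ (x, y) hm
        field_simp
        ring
      rw [hval] at h
      exact h
    intro x hx
    exact eq_const_of_hasDerivAt_zero hIc hder x hx x₀ hx₀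
  constructor
  · -- existence
    set p₁ : ℝ → ℝ := fun t => P (t, y₀) with hp₁def
    set q₂ : ℝ → ℝ := fun t => B (x₀, t) - b (x₀, t) * P (x₀, t) with hq₂def
    have hcurve₁ : ContDiff ℝ (⊤ : ℕ∞) (fun t : ℝ => ((t, y₀) : ℝ × ℝ)) :=
      contDiff_id.prodMk contDiff_const
    have hcurve₂ : ContDiff ℝ (⊤ : ℕ∞) (fun t : ℝ => ((x₀, t) : ℝ × ℝ)) :=
      contDiff_const.prodMk contDiff_id
    have hmap₁ : Set.MapsTo (fun t : ℝ => ((t, y₀) : ℝ × ℝ)) I (I ×ˢ J) :=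
      fun t ht => hmem ht hy₀
    have hmap₂ : Set.MapsTo (fun t : ℝ => ((x₀, t) : ℝ × ℝ)) J (I ×ˢ J) :=
      fun t ht => hmem hx₀ ht
    have hp₁ : ContDiffOn ℝ (⊤ : ℕ∞) p₁ I :=
      hP.comp hcurve₁.contDiffOn hmap₁
    have hq₂ : ContDiffOn ℝ (⊤ : ℕ∞) q₂ J :=
      (hB.comp hcurve₂.contDiffOn hmap₂).sub
        ((hb.comp hcurve₂.contDiffOn hmap₂).mul (hP.comp hcurve₂.contDiffOn hmap₂))
    -- antiderivatives
    have FTC : ∀ (s : Set ℝ), IsOpen s → s.OrdConnected → ∀ (f : ℝ → ℝ), ContinuousOn f s →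
        ∀ a ∈ s, ∀ x ∈ s, HasDerivAt (fun z => ∫ t in a..z, f t) (f x) x := by
      intro s hs hsc f hf a ha x hx
      have hint : IntervalIntegrable f MeasureTheory.volume a x :=
        (hf.mono (hsc.uIcc_subset ha hx)).intervalIntegrable
      exact intervalIntegral.integral_hasDerivAt_right hint
        (hf.stronglyMeasurableAtFilter hs x hx) (hf.continuousAt (hs.mem_nhds hx))
    have hds₁ : ∀ x ∈ I, HasDerivAt (fun z => ∫ t in x₀..z, p₁ t) (p₁ x) x :=
      FTC I hI hIc p₁ hp₁.continuousOn x₀ hx₀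
    have hds₂ : ∀ y ∈ J, HasDerivAt (fun z => ∫ t in y₀..z, q₂ t) (q₂ y) y :=
      FTC J hJ hJc q₂ hq₂.continuousOn y₀ hy₀
    refine ⟨fun z => ∫ t in x₀..z, p₁ t, fun z => ∫ t in y₀..z, q₂ t, ?_, ?_, ?_⟩
    · rw [contDiffOn_infty_iff_deriv_of_isOpen hI]
      exact ⟨fun x hx => ((hds₁ x hx).differentiableAt).differentiableWithinAt,
        hp₁.congr fun x hx => (hds₁ x hx).deriv⟩
    · rw [contDiffOn_infty_iff_deriv_of_isOpen hJ]
      exact ⟨fun y hy => ((hds₂ y hy).differentiableAt).differentiableWithinAt,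
        hq₂.congr fun y hy => (hds₂ y hy).deriv⟩
    · rintro ⟨x, y⟩ hp
      have hx : x ∈ I := hp.1
      have hy : y ∈ J := hp.2
      have e1 : deriv (fun z => ∫ t in x₀..z, p₁ t) x = p₁ x := (hds₁ x hx).deriv
      have e2 : deriv (fun z => ∫ t in y₀..z, q₂ t) y = q₂ y := (hds₂ y hy).deriv
      rw [e1, e2]; simp only [hp₁def, hq₂def]
      have k1 := K1 x hx y hy
      have k1' := K1 x₀ hx₀ y hy
      have k2 := K2 y hy x hx
      rw [← k1]
      linarith [k2]
  · -- uniqueness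
    intro s₁ s₂ t₁ t₂ hs₁ hs₂ ht₁ ht₂ heq₁ heq₂
    set u : ℝ → ℝ := fun x => deriv s₁ x - deriv t₁ x with hudef
    set v : ℝ → ℝ := fun y => deriv s₂ y - deriv t₂ y with hvdef
    have hrel : ∀ x ∈ I, ∀ y ∈ J, b (x, y) * u x + v y = 0 := by
      intro x hx y hy
      have h1 := heq₁ (x, y) (hmem hx hy)
      have h2 := heq₂ (x, y) (hmem hx hy)
      simp only [hudef, hvdef]
      dsimp only at h1 h2 ⊢
      ring_nf
      ring_nf at h1 h2
      linarith
    have hu : ∀ x ∈ I, u x = 0 := by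
      by_contra hcon
      push_neg at hcon
      obtain ⟨x', hx', hux'⟩ := hcon
      by_cases hv0 : ∀ y ∈ J, v y = 0
      · have hbz : ∀ y ∈ J, b (x', y) = 0 := by
          intro y hy
          have h := hrel x' hx' y hy
          rw [hv0 y hy, add_zero] at h
          exact (mul_eq_zero.1 h).resolve_right hux'
        have hbyz : pdy b (x', y₀) = 0 := by
          have hev : (fun y => b ((x', y₀).1, y)) =ᶠ[nhds (x', y₀).2] fun _ => (0 : ℝ) :=
            Filter.eventuallyEq_of_mem (hJ.mem_nhds hy₀) fun t ht => hbz t ht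
          show deriv (fun y => b ((x', y₀).1, y)) (x', y₀).2 = 0
          rw [hev.deriv_eq, deriv_const]
        have := hΔ (x', y₀) (hmem hx' hy₀)
        rw [hbyz, hbz y₀ hy₀] at this
        simp at this
      · push_neg at hv0
        obtain ⟨yv, hyv, hvy⟩ := hv0
        have hbne : b (x', yv) ≠ 0 := by
          intro h
          have := hrel x' hx' yv hyv
          rw [h, zero_mul, zero_add] at this
          exact hvy this
        -- the open set where b (·, yv) ≠ 0
        have hbcont : ContinuousOn (fun x => b (x, yv)) I := by
          have : ContinuousOn (fun x : ℝ => ((x, yv) : ℝ × ℝ)) I :=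
        (continuous_id.prodMk continuous_const).continuousOn
          exact hb.continuousOn.comp this fun x hx => hmem hx hyv
        have hVopen : IsOpen (I ∩ (fun x => b (x, yv)) ⁻¹' {(0 : ℝ)}ᶜ) :=
          hbcont.isOpen_inter_preimage hI isOpen_compl_singleton
        set V := I ∩ (fun x => b (x, yv)) ⁻¹' {(0 : ℝ)}ᶜ with hVdef
        have hx'V : x' ∈ V := ⟨hx', hbne⟩
        set ut : ℝ → ℝ := fun x => -v yv / b (x, yv) with hutdef
        have hueq : ∀ x ∈ V, u x = ut x := by
          intro x hxV
          have hb0 : b (x, yv) ≠ 0 := hxV.2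
          have h := hrel x hxV.1 yv hyv
          simp only [hutdef]
          field_simp
          linarith
        -- derivative of ut at x'
        have hbderx : ∀ x ∈ I, HasDerivAt (fun z => b (z, yv)) (pdx b (x, yv)) x := by
          intro x hx
          exact hasDerivAt_pdx hU hb (hmem hx hyv)
        obtain ⟨d, hutd⟩ : ∃ d, HasDerivAt ut d x' :=
          ⟨_, (hasDerivAt_const x' (-v yv)).div (hbderx x' hx') hbne⟩
        set c : ℝ := ut x' with hcdef
        have hcne : c ≠ 0 := by
          rw [hcdef, ← hueq x' hx'V]
          exact hux'
        -- S1
        have S1 : ∀ y ∈ J, pdx b (x', y) * c + b (x', y) * d = 0 := by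
          intro y hy
          have hF : HasDerivAt (fun x => b (x, y) * ut x)
              (pdx b (x', y) * c + b (x', y) * d) x' := by
            have h1 : HasDerivAt (fun z => b (z, y)) (pdx b (x', y)) x' :=
              hasDerivAt_pdx hU hb (hmem hx' hy)
            simpa [hcdef, Pi.mul_def] using h1.mul hutd
          have hev : (fun x => b (x, y) * ut x) =ᶠ[nhds x'] fun _ => -v y := by
            refine Filter.eventuallyEq_of_mem (hVopen.mem_nhds hx'V) fun x hxV => ?_
            have := hrel x hxV.1 y hy
            rw [hueq x hxV] at this
            linarith
          have hF' : HasDerivAt (fun _ : ℝ => -v y) (pdx b (x', y) * c + b (x', y) * d) x' :=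
            hF.congr_of_eventuallyEq hev.symm
          have := hF'.unique (hasDerivAt_const x' (-v y))
          linarith [this]
        -- S2 : differentiate S1 in y
        have S2 : pdy (pdx b) (x', yv) * c + pdy b (x', yv) * d = 0 := by
          have hG : HasDerivAt (fun y => pdx b (x', y) * c + b (x', y) * d)
              (pdy (pdx b) (x', yv) * c + pdy b (x', yv) * d) yv := by
            have h1 : HasDerivAt (fun y => pdx b (x', y)) (pdy (pdx b) (x', yv)) yv :=
              hasDerivAt_pdy hU hbx (hmem hx' hyv)
            have h2 : HasDerivAt (fun y => b (x', y)) (pdy b (x', yv)) yv :=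
              hasDerivAt_pdy hU hb (hmem hx' hyv)
            exact (h1.mul_const c).add (h2.mul_const d)
          have hev : (fun y => pdx b (x', y) * c + b (x', y) * d) =ᶠ[nhds yv]
              fun _ => (0 : ℝ) :=
            Filter.eventuallyEq_of_mem (hJ.mem_nhds hyv) fun y hy => S1 y hy
          have hG' : HasDerivAt (fun _ : ℝ => (0 : ℝ))
              (pdy (pdx b) (x', yv) * c + pdy b (x', yv) * d) yv :=
            hG.congr_of_eventuallyEq hev.symm
          exact (hG'.unique (hasDerivAt_const yv 0))
        have hS1 := S1 yv hyv
        have hD := hΔ (x', yv) (hmem hx' hyv)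
        apply hD
        have : c * (pdx b (x', yv) * pdy b (x', yv) - b (x', yv) * pdy (pdx b) (x', yv)) = 0 := by
          linear_combination pdy b (x', yv) * hS1 - b (x', yv) * S2
        exact (mul_eq_zero.1 this).resolve_left hcne
    have hv : ∀ y ∈ J, v y = 0 := by
      intro y hy
      have := hrel x₀ hx₀ y hy
      rw [hu x₀ hx₀, mul_zero, zero_add] at this
      exact this
    constructor
    · refine ⟨s₁ x₀ - t₁ x₀, fun x hx => ?_⟩
      have hder : ∀ z ∈ I, HasDerivAt (fun w => s₁ w - t₁ w) 0 z := by
        intro z hz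
        have h1 := (hs₁.differentiableAt (hI.mem_nhds hz)).hasDerivAt
        have h2 := (ht₁.differentiableAt (hI.mem_nhds hz)).hasDerivAt
        have := h1.sub h2
        rwa [show deriv s₁ z - deriv t₁ z = 0 from hu z hz] at this
      exact eq_const_of_hasDerivAt_zero hIc hder x hx x₀ hx₀
    · refine ⟨s₂ y₀ - t₂ y₀, fun y hy => ?_⟩
      have hder : ∀ z ∈ J, HasDerivAt (fun w => s₂ w - t₂ w) 0 z := by
        intro z hz
        have h1 := (hs₂.differentiableAt (hJ.mem_nhds hz)).hasDerivAt
        have h2 := (ht₂.differentiableAt (hJ.mem_nhds hz)).hasDerivAt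
        have := h1.sub h2
        rwa [show deriv s₂ z - deriv t₂ z = 0 from hv z hz] at this
      exact eq_const_of_hasDerivAt_zero hJc hder y hy y₀ hy₀
end
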